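/- The group presented by ⟨a,b,c ∣ [b⁻¹,c] = 1, aca⁻¹b³c⁻² = 1, ab⁻¹a⁻¹bc⁻¹ = 1⟩ is isomorphic to the semidirect product ℤ ⋉_A ℤ² where A = [[1,1],[3,2]]. -/

import Mathlib

open Matrix

/-- The additive automorphism of `ℤ²` induced by a matrix in `GL(2,ℤ)`. -/
def glAddEquiv (A : GL (Fin 2) ℤ) : (Fin 2 → ℤ) ≃+ (Fin 2 → ℤ) where
  toFun v := Matrix.mulVec (A : Matrix (Fin 2) (Fin 2) ℤ) v
  invFun v := Matrix.mulVec ((A⁻¹ : GL (Fin 2) ℤ) : Matrix (Fin 2) (Fin 2) ℤ) v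
  left_inv v := by
    show Matrix.mulVec _ (Matrix.mulVec _ v) = v
    rw [Matrix.mulVec_mulVec, ← Matrix.GeneralLinearGroup.coe_mul, inv_mul_cancel]
    simp
  right_inv v := by
    show Matrix.mulVec _ (Matrix.mulVec _ v) = v
    rw [Matrix.mulVec_mulVec, ← Matrix.GeneralLinearGroup.coe_mul, mul_inv_cancel]
    simp
  map_add' x y := by
    show Matrix.mulVec _ (x+y) = _
    rw [Matrix.mulVec_add]

/-- The action of `ℤ` on `ℤ²` where `1` acts by the matrix `A`. -/
def glZAction (A : GL (Fin 2) ℤ) :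
    Multiplicative ℤ →* MulAut (Multiplicative (Fin 2 → ℤ)) :=
  zpowersHom _ (AddEquiv.toMultiplicative (glAddEquiv A))

/-- The semidirect product `ℤ ⋉_A ℤ²`. -/
def ZSemidirect (A : GL (Fin 2) ℤ) : Type :=
  SemidirectProduct (Multiplicative (Fin 2 → ℤ)) (Multiplicative ℤ) (glZAction A)

instance (A : GL (Fin 2) ℤ) : Group (ZSemidirect A) :=
  inferInstanceAs (Group (SemidirectProduct _ _ (glZAction A)))

namespace Stmt11

def a : FreeGroup (Fin 3) := FreeGroup.of 0
def b : FreeGroup (Fin 3) := FreeGroup.of 1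
def c : FreeGroup (Fin 3) := FreeGroup.of 2

/-- relators; the first one is the commutator [b⁻¹, c] = b⁻¹ * c * b * c⁻¹ -/
def rels : Set (FreeGroup (Fin 3)) :=
  {b⁻¹ * c * b * c⁻¹, a * c * a⁻¹ * b ^ 3 * (c ^ 2)⁻¹, a * b⁻¹ * a⁻¹ * b * c⁻¹}

/-! ### Auxiliary material for the proof -/

open Multiplicative SemidirectProduct

section Aux

/-- Extensionality for monoid homs out of `Multiplicative (Fin 2 → ℤ)`. -/
private lemma ext2 {G : Type*} [Group G] {f g : Multiplicative (Fin 2 → ℤ) →* G}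
    (h : ∀ i : Fin 2, f (ofAdd (Pi.single i 1)) = g (ofAdd (Pi.single i 1))) : f = g := by
  apply MonoidHom.ext; intro v
  have hv : (toAdd v) = (toAdd v 0) • Pi.single (0 : Fin 2) (1 : ℤ)
      + (toAdd v 1) • Pi.single (1 : Fin 2) (1 : ℤ) := by
    funext i; fin_cases i <;> simp
  have hv' : v = ofAdd (toAdd v) := rfl
  rw [hv', hv, ofAdd_add, ofAdd_zsmul, ofAdd_zsmul, _root_.map_mul, _root_.map_mul,
    _root_.map_zpow, _root_.map_zpow, _root_.map_zpow, _root_.map_zpow, h 0, h 1]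

private lemma rel_one {r : FreeGroup (Fin 3)} (h : r ∈ rels) :
    PresentedGroup.mk rels r = 1 :=
  (QuotientGroup.eq_one_iff r).2 (Subgroup.subset_normalClosure h)

private lemma mk_of (i : Fin 3) :
    PresentedGroup.mk rels (FreeGroup.of i) = PresentedGroup.of i := rfl

/-- images of the generators in the presented group -/
private def oA : PresentedGroup rels := PresentedGroup.of 0
private def oB : PresentedGroup rels := PresentedGroup.of 1
private def oC : PresentedGroup rels := PresentedGroup.of 2

private lemma rel1 : oB⁻¹ * oC * oB * oC⁻¹ = 1 := by
  have h := rel_one (show b⁻¹ * c * b * c⁻¹ ∈ rels from Set.mem_insert _ _)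
  simpa only [oB, oC, b, c, _root_.map_mul, _root_.map_inv, mk_of] using h

private lemma rel2 : oA * oC * oA⁻¹ * oB ^ 3 * (oC ^ 2)⁻¹ = 1 := by
  have h := rel_one (show a * c * a⁻¹ * b ^ 3 * (c ^ 2)⁻¹ ∈ rels from
    Set.mem_insert_of_mem _ (Set.mem_insert _ _))
  simpa only [oA, oB, oC, a, b, c, _root_.map_mul, _root_.map_inv, _root_.map_pow, mk_of] using h

private lemma rel3 : oA * oB⁻¹ * oA⁻¹ * oB * oC⁻¹ = 1 := by
  have h := rel_one (show a * b⁻¹ * a⁻¹ * b * c⁻¹ ∈ rels from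
    Set.mem_insert_of_mem _ (Set.mem_insert_of_mem _ rfl))
  simpa only [oA, oB, oC, a, b, c, _root_.map_mul, _root_.map_inv, mk_of] using h

private lemma hBC : oB * oC = oC * oB := by
  have h : oC * oB = oB * (oB⁻¹ * oC * oB * oC⁻¹) * oC := by group
  rw [rel1] at h
  rw [h]; group

private lemma hb : oA * oB * oA⁻¹ = oB * oC⁻¹ := by
  have e : oA * oB⁻¹ * oA⁻¹ = (oA * oB⁻¹ * oA⁻¹ * oB * oC⁻¹) * (oC * oB⁻¹) := by group
  rw [rel3, one_mul] at e
  have : oA * oB * oA⁻¹ = (oA * oB⁻¹ * oA⁻¹)⁻¹ := by group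
  rw [this, e]; group

private lemma hc : oA * oC * oA⁻¹ = oC ^ 2 * (oB⁻¹) ^ 3 := by
  have e : oA * oC * oA⁻¹ = (oA * oC * oA⁻¹ * oB ^ 3 * (oC ^ 2)⁻¹) * (oC ^ 2 * (oB⁻¹) ^ 3) := by
    group
  rw [rel2, one_mul] at e
  exact e

/-- `X` and `Y` are the images of the standard basis vectors. -/
private def X : PresentedGroup rels := oB * oC
private def Y : PresentedGroup rels := oB⁻¹

private lemma hXY : X * Y = oC := by
  show oB * oC * oB⁻¹ = oC
  rw [hBC]; group

private lemma hYX : Y * X = oC := by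
  show oB⁻¹ * (oB * oC) = oC
  group

private lemma commXY : Commute X Y := hXY.trans hYX.symm

/-- the homomorphism from `ℤ²` to the presented group -/
private def fN : Multiplicative (Fin 2 → ℤ) →* PresentedGroup rels where
  toFun v := X ^ (toAdd v 0) * Y ^ (toAdd v 1)
  map_one' := by simp
  map_mul' v w := by
    show X ^ (toAdd v 0 + toAdd w 0) * Y ^ (toAdd v 1 + toAdd w 1) = _
    have hcomm : X ^ (toAdd w 0) * Y ^ (toAdd v 1) = Y ^ (toAdd v 1) * X ^ (toAdd w 0) :=
      (commXY.zpow_zpow _ _).eq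
    calc X ^ (toAdd v 0 + toAdd w 0) * Y ^ (toAdd v 1 + toAdd w 1)
        = X ^ (toAdd v 0) * (X ^ (toAdd w 0) * Y ^ (toAdd v 1)) * Y ^ (toAdd w 1) := by
          rw [_root_.zpow_add, _root_.zpow_add]; group
      _ = X ^ (toAdd v 0) * (Y ^ (toAdd v 1) * X ^ (toAdd w 0)) * Y ^ (toAdd w 1) := by
          rw [hcomm]
      _ = _ := by group

private lemma fN_apply (u : Fin 2 → ℤ) : fN (ofAdd u) = X ^ (u 0) * Y ^ (u 1) := rfl

/-- the homomorphism from `ℤ` to the presented group -/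
private def fH : Multiplicative ℤ →* PresentedGroup rels := zpowersHom _ oA

variable (A : GL (Fin 2) ℤ)

private lemma glZAction_one_apply (u : Fin 2 → ℤ) :
    glZAction A (ofAdd 1) (ofAdd u) =
      ofAdd ((A : Matrix (Fin 2) (Fin 2) ℤ).mulVec u) := by
  show (zpowersHom _ (AddEquiv.toMultiplicative (glAddEquiv A)) (ofAdd 1)) (ofAdd u) = _
  rw [zpowersHom_apply, toAdd_ofAdd, _root_.zpow_one]
  rfl

/-- The images of the free generators in the semidirect product. -/
private def fvec : Fin 3 → SemidirectProduct (Multiplicative (Fin 2 → ℤ))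
    (Multiplicative ℤ) (glZAction A) :=
  ![inr (ofAdd 1), inl (ofAdd ![0, -1]), inl (ofAdd ![1, 1])]

variable {A} (hA : (A : Matrix (Fin 2) (Fin 2) ℤ) = !![1, 1; 3, 2])

private lemma keyX : oA * X * oA⁻¹ = X * Y ^ 3 := by
  have h : oA * X * oA⁻¹ = (oA * oB * oA⁻¹) * (oA * oC * oA⁻¹) := by
    show oA * (oB * oC) * oA⁻¹ = _
    group
  rw [h, hb, hc]
  show oB * oC⁻¹ * (oC ^ 2 * (oB⁻¹) ^ 3) = oB * oC * oB⁻¹ ^ 3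
  group

private lemma keyY : oA * Y * oA⁻¹ = X * Y ^ 2 := by
  have e : oA * oB⁻¹ * oA⁻¹ = (oA * oB⁻¹ * oA⁻¹ * oB * oC⁻¹) * (oC * oB⁻¹) := by group
  rw [rel3, one_mul] at e
  show oA * oB⁻¹ * oA⁻¹ = oB * oC * oB⁻¹ ^ 2
  rw [e, hBC]; group

include hA in
private lemma key1 : ∀ v, fN (glZAction A (ofAdd 1) v) = oA * fN v * oA⁻¹ := by
  have h : fN.comp (glZAction A (ofAdd 1)).toMonoidHom
      = (MulAut.conj oA).toMonoidHom.comp fN := by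
    apply ext2
    intro i
    fin_cases i
    · show fN (glZAction A (ofAdd 1) (ofAdd (Pi.single 0 1)))
        = MulAut.conj oA (fN (ofAdd (Pi.single 0 1)))
      rw [glZAction_one_apply, hA]
      have h1 : (!![1, 1; 3, 2] : Matrix (Fin 2) (Fin 2) ℤ).mulVec (Pi.single 0 1)
          = ![1, 3] := by decide
      rw [h1, fN_apply, fN_apply]
      simp only [Matrix.cons_val_zero, Matrix.cons_val_one, Matrix.head_cons,
        Pi.single_eq_same, Pi.single_eq_of_ne (by decide : (1 : Fin 2) ≠ 0),
        _root_.zpow_one, _root_.zpow_zero, mul_one, MulAut.conj_apply]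
      exact (keyX).symm
    · show fN (glZAction A (ofAdd 1) (ofAdd (Pi.single 1 1)))
        = MulAut.conj oA (fN (ofAdd (Pi.single 1 1)))
      rw [glZAction_one_apply, hA]
      have h1 : (!![1, 1; 3, 2] : Matrix (Fin 2) (Fin 2) ℤ).mulVec (Pi.single 1 1)
          = ![1, 2] := by decide
      rw [h1, fN_apply, fN_apply]
      simp only [Matrix.cons_val_zero, Matrix.cons_val_one, Matrix.head_cons,
        Pi.single_eq_same, Pi.single_eq_of_ne (by decide : (0 : Fin 2) ≠ 1),
        _root_.zpow_one, _root_.zpow_zero, one_mul, MulAut.conj_apply]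
      exact (keyY).symm
  intro v
  exact DFunLike.congr_fun h v

include hA in
private lemma key1' : ∀ v, fN (glZAction A (ofAdd (-1)) v) = oA⁻¹ * fN v * oA := by
  intro v
  have h0 : glZAction A (ofAdd 1) (glZAction A (ofAdd (-1)) v) = v := by
    have : glZAction A (ofAdd 1) * glZAction A (ofAdd (-1)) = 1 := by
      rw [← _root_.map_mul]
      norm_num
    calc glZAction A (ofAdd 1) (glZAction A (ofAdd (-1)) v)
        = (glZAction A (ofAdd 1) * glZAction A (ofAdd (-1))) v := rfl
      _ = v := by rw [this]; rfl
  have h := key1 hA (glZAction A (ofAdd (-1)) v)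
  rw [h0] at h
  rw [h]; group

include hA in
private lemma keyn : ∀ n : ℤ, ∀ v,
    fN (glZAction A (ofAdd n) v) = oA ^ n * fN v * (oA ^ n)⁻¹ := by
  intro n
  induction n using Int.induction_on with
  | zero => intro v; simp [glZAction, zpowersHom_apply]
  | succ k ih =>
    intro v
    have hsplit : glZAction A (ofAdd ((k : ℤ) + 1)) v
        = glZAction A (ofAdd (k : ℤ)) (glZAction A (ofAdd 1) v) := by
      rw [ofAdd_add, _root_.map_mul]; rfl
    rw [hsplit, ih, key1 hA, _root_.zpow_add, _root_.zpow_one]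
    group
  | pred k ih =>
    intro v
    have hsplit : glZAction A (ofAdd (-(k : ℤ) - 1)) v
        = glZAction A (ofAdd (-(k : ℤ))) (glZAction A (ofAdd (-1)) v) := by
      rw [show (-(k : ℤ) - 1) = (-(k : ℤ)) + (-1) by ring, ofAdd_add, _root_.map_mul]; rfl
    rw [hsplit, ih, key1' hA, sub_eq_add_neg, _root_.zpow_add]
    group

include hA in
private lemma hcompat : ∀ g, fN.comp ((glZAction A) g).toMonoidHom
    = (MulAut.conj (fH g)).toMonoidHom.comp fN := by
  intro g
  ext v
  show fN (glZAction A g v) = fH g * fN v * (fH g)⁻¹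
  have hg : g = ofAdd (toAdd g) := rfl
  rw [hg, keyn hA (toAdd g) v]
  rfl

include hA in
private lemma hrels : ∀ r ∈ rels, FreeGroup.lift (fvec A) r = 1 := by
  have conj_inl : ∀ x : Multiplicative (Fin 2 → ℤ),
      (inr (ofAdd 1) : SemidirectProduct _ _ (glZAction A)) * inl x * (inr (ofAdd 1))⁻¹
        = inl (glZAction A (ofAdd 1) x) := by
    intro x
    rw [inl_aut]
    rw [← map_inv inr]
  intro r hr
  have hr' : r = b⁻¹ * c * b * c⁻¹ ∨ r = a * c * a⁻¹ * b ^ 3 * (c ^ 2)⁻¹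
      ∨ r = a * b⁻¹ * a⁻¹ * b * c⁻¹ := hr
  rcases hr' with rfl | rfl | rfl
  · simp only [_root_.map_mul, _root_.map_inv, a, b, c, FreeGroup.lift_apply_of, fvec,
      Matrix.cons_val_zero, Matrix.cons_val_one, Matrix.head_cons,
      Matrix.cons_val_two, Matrix.tail_cons]
    rw [← map_inv inl, ← map_inv inl, ← _root_.map_mul, ← _root_.map_mul, ← _root_.map_mul]
    have : (ofAdd (![0,-1] : Fin 2 → ℤ))⁻¹ * ofAdd ![1,1] * ofAdd ![0,-1]
        * (ofAdd (![1,1] : Fin 2 → ℤ))⁻¹ = 1 := by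
      rw [← ofAdd_neg, ← ofAdd_neg, ← ofAdd_add, ← ofAdd_add, ← ofAdd_add]
      rw [show (-![0,-1] + ![1,1] + ![0,-1] + -![1,1] : Fin 2 → ℤ) = 0 by decide]
      rfl
    rw [this, _root_.map_one]
  · simp only [_root_.map_mul, _root_.map_inv, _root_.map_pow, a, b, c, FreeGroup.lift_apply_of, fvec,
      Matrix.cons_val_zero, Matrix.cons_val_one, Matrix.head_cons,
      Matrix.cons_val_two, Matrix.tail_cons]
    rw [conj_inl, ← map_pow inl, ← map_pow inl, ← map_inv inl, ← _root_.map_mul, ← _root_.map_mul]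
    have : glZAction A (ofAdd 1) (ofAdd ![1,1]) * (ofAdd (![0,-1] : Fin 2 → ℤ)) ^ 3
        * ((ofAdd (![1,1] : Fin 2 → ℤ)) ^ 2)⁻¹ = 1 := by
      rw [glZAction_one_apply, hA, ← ofAdd_nsmul, ← ofAdd_nsmul, ← ofAdd_neg, ← ofAdd_add,
        ← ofAdd_add]
      rw [show ((!![1,1;3,2] : Matrix (Fin 2) (Fin 2) ℤ).mulVec ![1,1] + 3 • ![0,-1]
        + -(2 • ![1,1]) : Fin 2 → ℤ) = 0 by decide]
      rfl
    rw [this, _root_.map_one]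
  · simp only [_root_.map_mul, _root_.map_inv, a, b, c, FreeGroup.lift_apply_of, fvec,
      Matrix.cons_val_zero, Matrix.cons_val_one, Matrix.head_cons,
      Matrix.cons_val_two, Matrix.tail_cons]
    rw [← map_inv inl, ← map_inv inl, conj_inl, ← _root_.map_mul, ← _root_.map_mul]
    have : glZAction A (ofAdd 1) ((ofAdd (![0,-1] : Fin 2 → ℤ))⁻¹) * ofAdd ![0,-1]
        * (ofAdd (![1,1] : Fin 2 → ℤ))⁻¹ = 1 := by
      rw [← ofAdd_neg, glZAction_one_apply, hA, ← ofAdd_neg, ← ofAdd_add, ← ofAdd_add]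
      rw [show ((!![1,1;3,2] : Matrix (Fin 2) (Fin 2) ℤ).mulVec (-![0,-1]) + ![0,-1]
        + -![1,1] : Fin 2 → ℤ) = 0 by decide]
      rfl
    rw [this, _root_.map_one]

end Aux

/-- The presented group is isomorphic to the semidirect product given by
the matrix [[1,1],[3,2]]. -/
theorem presented_iso_semidirect (A : GL (Fin 2) ℤ)
    (hA : (A : Matrix (Fin 2) (Fin 2) ℤ) = !![1, 1; 3, 2]) :
    Nonempty (PresentedGroup rels ≃* ZSemidirect A) := by
  let Φ : PresentedGroup rels →* SemidirectProduct (Multiplicative (Fin 2 → ℤ))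
      (Multiplicative ℤ) (glZAction A) := PresentedGroup.toGroup (hrels hA)
  let Ψ : SemidirectProduct (Multiplicative (Fin 2 → ℤ)) (Multiplicative ℤ) (glZAction A)
      →* PresentedGroup rels := SemidirectProduct.lift fN fH (hcompat hA)
  have hΦof : ∀ i, Φ (PresentedGroup.of i) = fvec A i := fun i => PresentedGroup.toGroup.of _
  have h1 : Ψ.comp Φ = MonoidHom.id (PresentedGroup rels) := by
    apply PresentedGroup.ext
    intro i
    fin_cases i
    · show Ψ (Φ (PresentedGroup.of 0)) = PresentedGroup.of 0
      rw [hΦof]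
      show Ψ (inr (ofAdd 1)) = oA
      rw [SemidirectProduct.lift_inr]
      show oA ^ (1 : ℤ) = oA
      exact zpow_one oA
    · show Ψ (Φ (PresentedGroup.of 1)) = PresentedGroup.of 1
      rw [hΦof]
      show Ψ (inl (ofAdd ![0, -1])) = oB
      rw [SemidirectProduct.lift_inl, fN_apply]
      show X ^ (0 : ℤ) * Y ^ (-1 : ℤ) = oB
      rw [_root_.zpow_zero, one_mul, _root_.zpow_neg, _root_.zpow_one]
      show oB⁻¹⁻¹ = oB
      exact inv_inv oB
    · show Ψ (Φ (PresentedGroup.of 2)) = PresentedGroup.of 2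
      rw [hΦof]
      show Ψ (inl (ofAdd ![1, 1])) = oC
      rw [SemidirectProduct.lift_inl, fN_apply]
      show X ^ (1 : ℤ) * Y ^ (1 : ℤ) = oC
      rw [_root_.zpow_one, _root_.zpow_one]
      exact hXY
  have h2 : Φ.comp Ψ = MonoidHom.id _ := by
    apply SemidirectProduct.hom_ext
    · apply ext2
      intro i
      fin_cases i
      · show Φ (Ψ (inl (ofAdd (Pi.single 0 1)))) = inl (ofAdd (Pi.single 0 1))
        rw [SemidirectProduct.lift_inl, fN_apply]
        rw [Pi.single_eq_same, Pi.single_eq_of_ne (by decide : (1 : Fin 2) ≠ 0),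
          _root_.zpow_one, _root_.zpow_zero, mul_one]
        show Φ (oB * oC) = _
        rw [_root_.map_mul]
        show Φ (PresentedGroup.of 1) * Φ (PresentedGroup.of 2) = _
        rw [hΦof, hΦof]
        show inl (ofAdd ![0, -1]) * inl (ofAdd ![1, 1]) = _
        rw [← _root_.map_mul, ← ofAdd_add]
        rw [show (![0,-1] + ![1,1] : Fin 2 → ℤ) = Pi.single 0 1 by decide]
      · show Φ (Ψ (inl (ofAdd (Pi.single 1 1)))) = inl (ofAdd (Pi.single 1 1))
        rw [SemidirectProduct.lift_inl, fN_apply]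
        rw [Pi.single_eq_same, Pi.single_eq_of_ne (by decide : (0 : Fin 2) ≠ 1),
          _root_.zpow_one, _root_.zpow_zero, one_mul]
        show Φ (oB⁻¹) = _
        rw [_root_.map_inv]
        show (Φ (PresentedGroup.of 1))⁻¹ = _
        rw [hΦof]
        show (inl (ofAdd ![0, -1]))⁻¹ = _
        rw [← map_inv inl, ← ofAdd_neg]
        rw [show (-![0,-1] : Fin 2 → ℤ) = Pi.single 1 1 by decide]
    · apply MonoidHom.ext_mint
      show Φ (Ψ (inr (ofAdd 1))) = inr (ofAdd 1)
      rw [SemidirectProduct.lift_inr]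
      show Φ (oA ^ (1 : ℤ)) = _
      rw [_root_.zpow_one]
      show Φ (PresentedGroup.of 0) = _
      rw [hΦof]
      rfl
  exact ⟨MonoidHom.toMulEquiv Φ Ψ h1 h2⟩

end Stmt11
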